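/- Let G be a group, write H = [G,G^φ] ≤ ν(G), and suppose every tensor has finite conjugacy class in ν(G). Let m be the maximum over tensors x of the index of C_H(x) in H, let a be a tensor with [H : C_H(a)] = m, let b₁, …, b_m ∈ H be elements such that a^H = {a^{b₁}, …, a^{b_m}}, and let U = C_{ν(G)}(⟨b₁, …, b_m⟩). If u ∈ U and u·a is a tensor, then [H, u] ≤ [H, a]. -/

import Mathlib

namespace TensorNu

universe u

/-- The commutator `[x,y] = x⁻¹y⁻¹xy`. -/
def comm {K : Type*} [Group K] (x y : K) : K := x⁻¹ * y⁻¹ * x * y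

/-- Conjugation `x^y = y⁻¹xy`. -/
def conj {K : Type*} [Group K] (x y : K) : K := y⁻¹ * x * y

variable (G : Type u) [Group G]

/-- The defining relators of `ν(G)`, as elements of the free group on `G ⊕ G`,
where `Sum.inl` corresponds to the canonical copy of `G` and `Sum.inr` to the
isomorphic copy `G^φ` (`g ↦ g^φ`).  They comprise the multiplication tables of
`G` and of `G^φ`, together with the relations
`[g₁,g₂^φ]^{g₃} = [g₁^{g₃},(g₂^{g₃})^φ]` and `[g₁,g₂^φ]^{g₃} = [g₁,g₂^φ]^{g₃^φ}`. -/
def nuRels : Set (FreeGroup (G ⊕ G)) :=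
  {r | (∃ g h : G, r = FreeGroup.of (Sum.inl g) * FreeGroup.of (Sum.inl h) *
          (FreeGroup.of (Sum.inl (g * h)))⁻¹)
     ∨ (∃ g h : G, r = FreeGroup.of (Sum.inr g) * FreeGroup.of (Sum.inr h) *
          (FreeGroup.of (Sum.inr (g * h)))⁻¹)
     ∨ (∃ g₁ g₂ g₃ : G, r =
          conj (comm (FreeGroup.of (Sum.inl g₁)) (FreeGroup.of (Sum.inr g₂)))
              (FreeGroup.of (Sum.inl g₃)) *
            (comm (FreeGroup.of (Sum.inl (conj g₁ g₃)))
              (FreeGroup.of (Sum.inr (conj g₂ g₃))))⁻¹)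
     ∨ (∃ g₁ g₂ g₃ : G, r =
          conj (comm (FreeGroup.of (Sum.inl g₁)) (FreeGroup.of (Sum.inr g₂)))
              (FreeGroup.of (Sum.inl g₃)) *
            (conj (comm (FreeGroup.of (Sum.inl g₁)) (FreeGroup.of (Sum.inr g₂)))
              (FreeGroup.of (Sum.inr g₃)))⁻¹)}

/-- The group `ν(G)`. -/
abbrev Nu := PresentedGroup (nuRels G)

/-- The canonical image of `g ∈ G` in `ν(G)`. -/
def ι (g : G) : Nu G := PresentedGroup.of (Sum.inl g)

/-- The canonical image `g^φ` of `g ∈ G` (via the copy `G^φ`) in `ν(G)`. -/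
def ιφ (g : G) : Nu G := PresentedGroup.of (Sum.inr g)

/-- The set `T⊗(G)` of tensors `[a, b^φ]`, `a, b ∈ G`. -/
def tensorSet : Set (Nu G) := {x | ∃ a b : G, x = comm (ι G a) (ιφ G b)}

/-- The image of `G` in `ν(G)` as a subgroup. -/
def GSub : Subgroup (Nu G) := Subgroup.closure (Set.range (ι G))

/-- The image of `G^φ` in `ν(G)` as a subgroup. -/
def GφSub : Subgroup (Nu G) := Subgroup.closure (Set.range (ιφ G))

/-- The non-abelian tensor square `[G, G^φ] ≤ ν(G)`. -/
def tensorSquare : Subgroup (Nu G) := ⁅GSub G, GφSub G⁆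

/-- `[S, x]`: the subgroup generated by the commutators `[s, x]`, `s ∈ S`. -/
def commSub {K : Type*} [Group K] (S : Set K) (x : K) : Subgroup K :=
  Subgroup.closure {c | ∃ s ∈ S, c = comm s x}

end TensorNu

namespace TensorNu

variable {K : Type*} [Group K]

lemma conj_set_card (H : Subgroup K) (g : K) :
    Nat.card {y : K | ∃ h ∈ H, y = conj g h} = (Subgroup.centralizer {g}).relIndex H := by
  rw [Subgroup.relIndex, Subgroup.index_eq_card]
  refine (Nat.card_congr (Equiv.ofBijective (fun q => Quotient.liftOn' q
    (fun (h : H) => (⟨conj g (↑h)⁻¹, (↑h)⁻¹, inv_mem h.2, rfl⟩ :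
      {y : K | ∃ h ∈ H, y = conj g h})) ?_) ⟨?_, ?_⟩)).symm
  · rintro h₁ h₂ hr
    have hc : g * ((↑h₁)⁻¹ * ↑h₂) = ((↑h₁)⁻¹ * ↑h₂ : K) * g := by
      have := (Subgroup.mem_subgroupOf.mp (QuotientGroup.leftRel_apply.mp hr))
      have h2 := Subgroup.mem_centralizer_iff.mp this g rfl
      simpa using h2
    refine Subtype.ext ?_
    show conj g (↑h₁)⁻¹ = conj g (↑h₂)⁻¹
    unfold conj
    calc (↑h₁)⁻¹⁻¹ * g * (↑h₁)⁻¹ = ↑h₁ * (g * ((↑h₁)⁻¹ * ↑h₂)) * (↑h₂)⁻¹ := by group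
    _ = ↑h₁ * (((↑h₁)⁻¹ * ↑h₂) * g) * (↑h₂)⁻¹ := by rw [hc]
    _ = (↑h₂)⁻¹⁻¹ * g * (↑h₂)⁻¹ := by group
  · intro q₁ q₂
    induction q₁ using Quotient.inductionOn'
    induction q₂ using Quotient.inductionOn'
    rename_i h₁ h₂
    intro hEq
    have hv : conj g (↑h₁)⁻¹ = conj g (↑h₂)⁻¹ := congrArg Subtype.val hEq
    refine Quotient.sound' (QuotientGroup.leftRel_apply.mpr ?_)
    refine Subgroup.mem_subgroupOf.mpr (Subgroup.mem_centralizer_iff.mpr ?_)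
    intro x hx
    simp only [Set.mem_singleton_iff] at hx
    rw [hx]
    push_cast
    have : (↑h₁ : K) * g * (↑h₁)⁻¹ = ↑h₂ * g * (↑h₂)⁻¹ := by
      have := hv; unfold conj at this; group at this ⊢
      simpa using this
    calc g * ((↑h₁)⁻¹ * ↑h₂) = (↑h₁)⁻¹ * (↑h₁ * g * (↑h₁)⁻¹) * ↑h₂ := by group
    _ = (↑h₁)⁻¹ * (↑h₂ * g * (↑h₂)⁻¹) * ↑h₂ := by rw [this]
    _ = ((↑h₁)⁻¹ * ↑h₂) * g := by group
  · rintro ⟨y, h, hH, rfl⟩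
    refine ⟨Quotient.mk'' ⟨h⁻¹, inv_mem hH⟩, ?_⟩
    simp only [Quotient.liftOn'_mk'']
    exact Subtype.ext (by simp)

lemma injective_of_card_range {m : ℕ} {α : Type*} (f : Fin m → α)
    (h : Nat.card (Set.range f) = m) : Function.Injective f := by
  have : Finite (Set.range f) := Set.finite_range f
  have hbij := (Nat.bijective_iff_surjective_and_card (Set.rangeFactorization f)).mpr
    ⟨Set.rangeFactorization_surjective, by simp [h]⟩
  intro i j hij
  exact hbij.1 (Subtype.ext hij)

/-- Under Hypothesis 3.1: if `u ∈ U = C_{ν(G)}(⟨b₁,…,b_m⟩)` and `u·a` is a tensor,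
then `[[G,G^φ], u] ≤ [[G,G^φ], a]`. -/
theorem commSub_le_of_mul_tensor (G : Type u) [Group G]
    (hfin : ∀ x ∈ tensorSet G, (conjugatesOf x).Finite)
    (m : ℕ)
    (hm : IsGreatest {k : ℕ | ∃ x ∈ tensorSet G,
        k = (Subgroup.centralizer {x}).relIndex (tensorSquare G)} m)
    (a : Nu G) (ha : a ∈ tensorSet G)
    (haidx : (Subgroup.centralizer {a}).relIndex (tensorSquare G) = m)
    (b : Fin m → Nu G) (hb : ∀ i, b i ∈ tensorSquare G)
    (hconj : {y : Nu G | ∃ h ∈ tensorSquare G, y = conj a h} =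
      Set.range fun i => conj a (b i))
    (u : Nu G)
    (hu : u ∈ Subgroup.centralizer ((Subgroup.closure (Set.range b) : Subgroup (Nu G)) : Set (Nu G)))
    (hua : u * a ∈ tensorSet G) :
    commSub (tensorSquare G : Set (Nu G)) u ≤ commSub (tensorSquare G : Set (Nu G)) a := by
  have haH : a ∈ tensorSquare G := by
    obtain ⟨p, q, rfl⟩ := ha
    have h1 : (ι G p)⁻¹ ∈ GSub G := inv_mem (Subgroup.subset_closure ⟨p, rfl⟩)
    have h2 : (ιφ G q)⁻¹ ∈ GφSub G := inv_mem (Subgroup.subset_closure ⟨q, rfl⟩)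
    open scoped commutatorElement in
    have he : comm (ι G p) (ιφ G q) = ⁅(ι G p)⁻¹, (ιφ G q)⁻¹⁆ := by
      rw [commutatorElement_def]; unfold comm; group
    rw [he]
    exact Subgroup.commutator_mem_commutator h1 h2
  have hcomm : ∀ i, b i * u = u * b i := fun i =>
    Subgroup.mem_centralizer_iff.mp hu _ (Subgroup.subset_closure ⟨i, rfl⟩)
  have hbu : ∀ i, (b i)⁻¹ * u * b i = u := by
    intro i
    rw [mul_assoc, ← hcomm i]; group
  have hxb : ∀ i, conj (u * a) (b i) = u * conj a (b i) := by
    intro i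
    unfold conj
    calc (b i)⁻¹ * (u * a) * b i = ((b i)⁻¹ * u * b i) * ((b i)⁻¹ * a * b i) := by group
    _ = u * ((b i)⁻¹ * a * b i) := by rw [hbu i]
  have hcard_a : Nat.card (Set.range fun i => conj a (b i)) = m := by
    rw [← hconj, conj_set_card, haidx]
  have hinj_a : Function.Injective (fun i => conj a (b i)) :=
    injective_of_card_range _ hcard_a
  set S := {y : Nu G | ∃ h ∈ tensorSquare G, y = conj (u * a) h} with hSdef
  have hSfin : S.Finite := by
    refine Set.Finite.subset (hfin (u * a) hua) ?_
    rintro y ⟨h, hh, rfl⟩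
    exact isConj_iff.mpr ⟨h⁻¹, by unfold conj; group⟩
  have : Finite S := hSfin
  have hSle : Nat.card S ≤ m := by
    rw [hSdef, conj_set_card]
    exact hm.2 ⟨u * a, hua, rfl⟩
  have hF : ∀ i, conj (u * a) (b i) ∈ S := fun i => ⟨b i, hb i, rfl⟩
  have hFinj : Function.Injective (fun i => (⟨conj (u * a) (b i), hF i⟩ : S)) := by
    intro i j hij
    apply hinj_a
    have h1 : conj (u * a) (b i) = conj (u * a) (b j) := congrArg Subtype.val hij
    rw [hxb i, hxb j] at h1
    exact mul_left_cancel h1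
  have hFbij : Function.Bijective (fun i => (⟨conj (u * a) (b i), hF i⟩ : S)) := by
    refine (Nat.bijective_iff_injective_and_card _).mpr ⟨hFinj, ?_⟩
    have h1 := Nat.card_le_card_of_injective _ hFinj
    have h2 : Nat.card (Fin m) = m := by simp
    exact le_antisymm h1 (by rw [h2]; exact hSle)
  have hsurj : ∀ s ∈ tensorSquare G, ∃ i, conj (u * a) (b i) = conj (u * a) s := by
    intro s hs
    obtain ⟨i, hi⟩ := hFbij.2 ⟨conj (u * a) s, s, hs, rfl⟩
    exact ⟨i, congrArg Subtype.val hi⟩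
  -- conjugation invariance of commSub by a
  have hgen : ∀ t ∈ tensorSquare G, comm t a ∈ commSub ((tensorSquare G : Set (Nu G))) a :=
    fun t ht => Subgroup.subset_closure ⟨t, ht, rfl⟩
  have hconjA : ∀ w ∈ commSub ((tensorSquare G : Set (Nu G))) a,
      a * w * a⁻¹ ∈ commSub ((tensorSquare G : Set (Nu G))) a := by
    intro w hw
    induction hw using Subgroup.closure_induction with
    | mem t ht =>
      obtain ⟨s, hs, rfl⟩ := ht
      have he : a * comm s a * a⁻¹ = comm (a * s * a⁻¹) a := by unfold comm; group
      rw [he]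
      exact hgen _ (mul_mem (mul_mem haH hs) (inv_mem haH))
    | one => simpa using one_mem _
    | mul x y hx hy ihx ihy =>
      have he : a * (x * y) * a⁻¹ = (a * x * a⁻¹) * (a * y * a⁻¹) := by group
      rw [he]; exact mul_mem ihx ihy
    | inv x hx ihx =>
      have he : a * x⁻¹ * a⁻¹ = (a * x * a⁻¹)⁻¹ := by group
      rw [he]; exact inv_mem ihx
  rw [commSub, Subgroup.closure_le]
  rintro c ⟨s, hs, rfl⟩
  obtain ⟨i, hi⟩ := hsurj s hs
  have h1 : s⁻¹ * (u * a) * s = (b i)⁻¹ * (u * a) * (b i) := by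
    unfold conj at hi; exact hi.symm
  have h4 : u * a * s = s * ((b i)⁻¹ * (u * a) * (b i)) := by rw [← h1]; group
  have h6 : s * u = u * a * s * (b i)⁻¹ * a⁻¹ * (b i) := by
    rw [h4, show s * ((b i)⁻¹ * (u * a) * (b i)) * (b i)⁻¹ * a⁻¹ * (b i)
      = s * ((b i)⁻¹ * u * (b i)) from by group, hbu i]
  have key : comm s u = a * ((comm s a)⁻¹ * comm (b i) a) * a⁻¹ := by
    unfold comm
    rw [show s⁻¹ * u⁻¹ * s * u = s⁻¹ * u⁻¹ * (s * u) from by group, h6]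
    group
  show comm s u ∈ commSub ((tensorSquare G : Set (Nu G))) a
  rw [key]
  exact hconjA _ (mul_mem (inv_mem (hgen s hs)) (hgen (b i) (hb i)))


end TensorNu
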